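/- For every natural number m, the following identity holds in the polynomial ring ℤ[x, U, V]: ∑_{s=0}^{m} (−1)^s · binom(m, s) · (x−s)_{m−s} · ( ∑_{j=0}^{s} binom(s, j) · (x−j)_{s−j} · U^{s−j} · V^{j} ) = ∑_{j=0}^{m} binom(m, j) · (x−j)_{m−j} · (−V)^{j} · (1−U)^{m−j}, where (y)_n denotes the falling factorial y(y−1)⋯(y−n+1) (a polynomial in ℤ[x] when y = x−s), and binom denotes the binomial coefficient. -/

import Mathlib

/-!
Statement 12: the polynomial identity (from the proof of Proposition 4.5 of the paper)
converting the alternating sum defining the modified Mumford relations into a single sum.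
It is an identity in `ℤ[x, U, V]`, modelled as `MvPolynomial (Fin 3) ℤ` with `x = X 0`,
`U = X 1`, `V = X 2`.
-/

open MvPolynomial

noncomputable section

/-- The falling factorial `(y)_n = y (y−1) ⋯ (y−n+1)` of an element of a commutative ring. -/
def fall {R : Type*} [CommRing R] (y : R) (n : ℕ) : R :=
  ∏ j ∈ Finset.range n, (y - (j : R))

lemma fall_add {R : Type*} [CommRing R] (y : R) (a b : ℕ) :
    fall y (a + b) = fall y a * fall (y - (a : R)) b := by
  unfold fall
  rw [Finset.prod_range_add]
  congr 1
  refine Finset.prod_congr rfl fun i _ => ?_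
  push_cast
  ring

/-- in `ℤ[x, U, V]`, for every natural number `m`,
`∑_{s=0}^m (−1)^s C(m,s) (x−s)_{m−s} ( ∑_{j=0}^s C(s,j) (x−j)_{s−j} U^{s−j} V^j )`
`= ∑_{j=0}^m C(m,j) (x−j)_{m−j} (−V)^j (1−U)^{m−j}`. -/
theorem stmt12 (m : ℕ) :
    ∑ s ∈ Finset.range (m + 1),
        (-1 : MvPolynomial (Fin 3) ℤ) ^ s * (m.choose s : MvPolynomial (Fin 3) ℤ) *
          fall ((X 0 : MvPolynomial (Fin 3) ℤ) - (s : MvPolynomial (Fin 3) ℤ)) (m - s) *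
          (∑ j ∈ Finset.range (s + 1),
            (s.choose j : MvPolynomial (Fin 3) ℤ) *
              fall ((X 0 : MvPolynomial (Fin 3) ℤ) - (j : MvPolynomial (Fin 3) ℤ)) (s - j) *
              (X 1 : MvPolynomial (Fin 3) ℤ) ^ (s - j) * (X 2 : MvPolynomial (Fin 3) ℤ) ^ j) =
      ∑ j ∈ Finset.range (m + 1),
        (m.choose j : MvPolynomial (Fin 3) ℤ) *
          fall ((X 0 : MvPolynomial (Fin 3) ℤ) - (j : MvPolynomial (Fin 3) ℤ)) (m - j) *
          (-(X 2 : MvPolynomial (Fin 3) ℤ)) ^ j *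
          (1 - (X 1 : MvPolynomial (Fin 3) ℤ)) ^ (m - j) := by
  set R := MvPolynomial (Fin 3) ℤ
  set x : R := X 0
  set U : R := X 1
  set V : R := X 2
  -- distribute the outer factor into the inner sum
  have hLHS :
      (∑ s ∈ Finset.range (m + 1),
        (-1 : R) ^ s * (m.choose s : R) * fall (x - (s : R)) (m - s) *
          (∑ j ∈ Finset.range (s + 1),
            (s.choose j : R) * fall (x - (j : R)) (s - j) * U ^ (s - j) * V ^ j)) =
      ∑ s ∈ Finset.range (m + 1), ∑ j ∈ Finset.range (s + 1),
        (-1 : R) ^ s * (m.choose s : R) * fall (x - (s : R)) (m - s) *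
          ((s.choose j : R) * fall (x - (j : R)) (s - j) * U ^ (s - j) * V ^ j) := by
    refine Finset.sum_congr rfl fun s _ => ?_
    rw [Finset.mul_sum]
  rw [hLHS]
  -- swap the order of summation
  rw [Finset.sum_comm' (t' := Finset.range (m + 1))
      (s' := fun j => Finset.Ico j (m + 1))
      (by
        intro s j
        simp only [Finset.mem_range, Finset.mem_Ico]
        omega)]
  refine Finset.sum_congr rfl fun j hj => ?_
  rw [Finset.mem_range] at hj
  have hjm : j ≤ m := by omega
  -- reindex s = j + k
  rw [Finset.sum_Ico_eq_sum_range]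
  have hrange : m + 1 - j = (m - j) + 1 := by omega
  rw [hrange]
  -- expand (1 - U)^(m - j) via the binomial theorem
  have hbin : (1 - U) ^ (m - j) =
      ∑ k ∈ Finset.range ((m - j) + 1), (-U) ^ k * ((m - j).choose k : R) := by
    have := add_pow (-U) (1 : R) (m - j)
    simp only [one_pow, mul_one] at this
    rw [show (1 : R) - U = -U + 1 by ring, this]
  rw [hbin, Finset.mul_sum]
  refine Finset.sum_congr rfl fun k hk => ?_
  rw [Finset.mem_range] at hk
  have hkmj : k ≤ m - j := by omega
  -- simplify natural number arithmetic
  have h1 : j + k - j = k := by omega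
  have h2 : m - (j + k) = m - j - k := by omega
  rw [h1, h2]
  -- falling factorial splitting
  have hfall : fall (x - (j : R)) (m - j) =
      fall (x - (j : R)) k * fall (x - ((j + k : ℕ) : R)) (m - j - k) := by
    have hsplit : m - j = k + (m - j - k) := by omega
    have hc : x - ((j + k : ℕ) : R) = (x - (j : R)) - (k : R) := by
      push_cast; ring
    rw [hc]
    conv_lhs => rw [hsplit]
    exact fall_add _ _ _
  -- choose identity
  have hchoose : (m.choose (j + k) : R) * ((j + k).choose j : R) =
      (m.choose j : R) * ((m - j).choose k : R) := by
    have := Nat.choose_mul (n := m) (k := j + k) (s := j) (by omega)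
    have h3 : j + k - j = k := by omega
    rw [h3] at this
    exact_mod_cast congrArg (Nat.cast : ℕ → R) this
  have hsign : (-1 : R) ^ (j + k) = (-1) ^ j * (-1) ^ k := by
    rw [pow_add]
  have hV : (-V) ^ j = (-1 : R) ^ j * V ^ j := by
    rw [neg_pow]
  have hU : (-U) ^ k = (-1 : R) ^ k * U ^ k := by
    rw [neg_pow]
  rw [hfall, hsign, hV, hU]
  linear_combination ((-1 : R) ^ j * (-1) ^ k * fall (x - ((j + k : ℕ) : R)) (m - j - k) *
    fall (x - (j : R)) k * U ^ k * V ^ j) * hchoose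


end
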